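/- Let s > 0 be fixed and for each positive integer n set α = β = ⌊sn⌋. Let Δ_n(s) = ∏_{j=0}^{n−1} (α+j−1)!·(β+j−1)!·j!/(α+β+n+j−2)!. Then as n → ∞, log Δ_n(s) = ( ((2s+1)²/2)·log(2s+1) − s²·log s − (s+1)²·log(s+1) − 2(s+1)²·log 2 )·n² + O(n log n). -/

import Mathlib

open Real Finset

lemma shift_sum (f : ℝ → ℝ) (K : ℕ) :
    ∑ j ∈ Finset.range K, f ((j:ℝ) + 2)
      = ∑ j ∈ Finset.range K, f ((j:ℝ) + 1) - f 1 + f ((K:ℝ) + 1) := by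
  induction K with
  | zero => simp
  | succ K ih =>
      rw [Finset.sum_range_succ, Finset.sum_range_succ, ih]
      have h2 : (((K+1:ℕ)):ℝ) + 1 = (K:ℝ) + 2 := by push_cast; ring
      rw [h2]; ring

lemma sum_vs_integral {f : ℝ → ℝ} {M : ℕ} (hM : 1 ≤ M)
    (hmono : MonotoneOn f (Set.Icc (1:ℝ) M)) :
    |(∑ k ∈ Finset.Ico 1 M, f k) - ∫ x in (1:ℝ)..(M:ℝ), f x| ≤ f M - f 1 := by
  have hcast : ((1:ℕ):ℝ) = (1:ℝ) := by norm_num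
  have hlow : (∑ k ∈ Finset.Ico 1 M, f k) ≤ ∫ x in (1:ℝ)..(M:ℝ), f x := by
    have := MonotoneOn.sum_le_integral_Ico hM (by rw [hcast] at *; exact hmono)
    simpa [hcast] using this
  have hup : (∫ x in (1:ℝ)..(M:ℝ), f x) ≤ ∑ i ∈ Finset.Ico 1 M, f ((i:ℝ) + 1) := by
    have := MonotoneOn.integral_le_sum_Ico hM (by rw [hcast] at *; exact hmono)
    simpa [hcast, Nat.cast_add] using this
  have e1 : ∑ i ∈ Finset.Ico 1 M, f ((i:ℝ) + 1)
      = ∑ j ∈ Finset.range (M-1), f ((j:ℝ) + 2) := by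
    rw [Finset.sum_Ico_eq_sum_range]
    exact Finset.sum_congr rfl fun j _ => by push_cast; ring_nf
  have e2 : ∑ k ∈ Finset.Ico 1 M, f (k:ℝ)
      = ∑ j ∈ Finset.range (M-1), f ((j:ℝ) + 1) := by
    rw [Finset.sum_Ico_eq_sum_range]
    exact Finset.sum_congr rfl fun j _ => by push_cast; ring_nf
  have hKcast : ((M - 1 : ℕ) : ℝ) + 1 = (M : ℝ) := by
    have : ((M - 1 : ℕ) : ℝ) = (M : ℝ) - 1 := by
      push_cast [Nat.cast_sub hM]; ring
    rw [this]; ring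
  have hshift := shift_sum f (M - 1)
  rw [hKcast] at hshift
  rw [e1, hshift, ← e2] at hup
  rw [abs_le]
  constructor <;> linarith

lemma mono_log (M : ℝ) : MonotoneOn Real.log (Set.Icc (1:ℝ) M) := fun x hx y hy hxy =>
  Real.log_le_log (lt_of_lt_of_le one_pos hx.1) hxy

lemma mono_xlogx (M : ℝ) : MonotoneOn (fun x : ℝ => x * Real.log x) (Set.Icc (1:ℝ) M) := by
  intro x hx y hy hxy
  have hx1 : (1:ℝ) ≤ x := hx.1
  have hy1 : (1:ℝ) ≤ y := hy.1
  have h1 : Real.log x ≤ Real.log y := Real.log_le_log (by linarith) hxy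
  have h2 : 0 ≤ Real.log x := Real.log_nonneg hx1
  dsimp only
  nlinarith

lemma hasDerivAt_F2 {x : ℝ} (hx : x ≠ 0) :
    HasDerivAt (fun x : ℝ => x^2/2 * Real.log x - x^2/4) (x * Real.log x) x := by
  have h1 : HasDerivAt (fun x : ℝ => x^2/2 * Real.log x) (x * Real.log x + x/2) x := by
    have := ((hasDerivAt_pow 2 x).div_const 2).mul (Real.hasDerivAt_log hx)
    refine this.congr_deriv ?_
    field_simp
    ring
  have h2 : HasDerivAt (fun x : ℝ => x^2/4) (x/2) x := by
    have := (hasDerivAt_pow 2 x).div_const 4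
    refine this.congr_deriv ?_
    ring
  have := h1.sub h2
  refine this.congr_deriv ?_
  ring

lemma integral_xlogx {M : ℕ} (hM : 1 ≤ M) :
    ∫ x in (1:ℝ)..(M:ℝ), x * Real.log x
      = (M:ℝ)^2/2 * Real.log M - (M:ℝ)^2/4 + 1/4 := by
  have hM1 : (1:ℝ) ≤ (M:ℝ) := by exact_mod_cast hM
  have hsub : Set.uIcc (1:ℝ) (M:ℝ) ⊆ {x : ℝ | x ≠ 0} := by
    rw [Set.uIcc_of_le hM1]
    intro x hx
    have : (1:ℝ) ≤ x := hx.1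
    simp only [Set.mem_setOf_eq]
    linarith
  have hcont : ContinuousOn (fun x : ℝ => x * Real.log x) (Set.uIcc (1:ℝ) (M:ℝ)) :=
    continuousOn_id.mul ((Real.continuousOn_log).mono hsub)
  have := intervalIntegral.integral_eq_sub_of_hasDerivAt
    (f := fun x : ℝ => x^2/2 * Real.log x - x^2/4)
    (f' := fun x : ℝ => x * Real.log x)
    (fun x hx => hasDerivAt_F2 (hsub hx))
    (hcont.intervalIntegrable)
  rw [this]
  simp [Real.log_one]

lemma log_factorial_eq (k : ℕ) :
    Real.log (k.factorial) = ∑ i ∈ Finset.Icc 1 k, Real.log i := by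
  rw [← Finset.Ico_add_one_right_eq_Icc, ← Finset.prod_Ico_id_eq_factorial k]
  push_cast
  rw [Real.log_prod]
  intro x hx
  have : 1 ≤ x := (Finset.mem_Ico.mp hx).1
  positivity

lemma log_factorial_bound (k : ℕ) (hk : 1 ≤ k) :
    |Real.log (k.factorial) - ((k:ℝ) * Real.log k - k)| ≤ 2 * Real.log k + 1 := by
  have hk1 : (1:ℝ) ≤ (k:ℝ) := by exact_mod_cast hk
  have hlogk : 0 ≤ Real.log k := Real.log_nonneg hk1
  have hint : ∫ x in (1:ℝ)..(k:ℝ), Real.log x = (k:ℝ) * Real.log k - k + 1 := by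
    rw [integral_log]
    simp [Real.log_one]
  have hcomp := sum_vs_integral hk (mono_log k)
  rw [hint, Real.log_one] at hcomp
  have hfact : Real.log k.factorial = (∑ i ∈ Finset.Ico 1 k, Real.log i) + Real.log k := by
    rw [log_factorial_eq, ← Finset.Ico_add_one_right_eq_Icc, Finset.sum_Ico_succ_top hk]
  rw [hfact, abs_le]
  rw [abs_le] at hcomp
  constructor <;> linarith [hcomp.1, hcomp.2]

noncomputable def Lsum (N : ℕ) : ℝ := ∑ k ∈ Finset.range N, Real.log (k.factorial)

noncomputable def F (x : ℝ) : ℝ := x^2/2 * Real.log x - 3/4 * x^2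

lemma Lsum_bound (N : ℕ) (hN : 1 ≤ N) : |Lsum N - F N| ≤ 4 * N * (Real.log N + 1) := by
  have hN1 : (1:ℝ) ≤ (N:ℝ) := by exact_mod_cast hN
  have hlogN : 0 ≤ Real.log N := Real.log_nonneg hN1
  have h0 : Lsum N = ∑ k ∈ Finset.Ico 1 N, Real.log (k.factorial) := by
    rw [Lsum, Finset.range_eq_Ico, ← Finset.sum_Ico_consecutive _ (Nat.zero_le 1) hN]
    simp [Nat.factorial]
  set g : ℕ → ℝ := fun k => (k:ℝ) * Real.log k - k with hg
  have hE : |∑ k ∈ Finset.Ico 1 N, (Real.log (k.factorial) - g k)|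
      ≤ (N:ℝ) * (2 * Real.log N + 1) := by
    calc |∑ k ∈ Finset.Ico 1 N, (Real.log (k.factorial) - g k)|
        ≤ ∑ k ∈ Finset.Ico 1 N, |Real.log (k.factorial) - g k| :=
          Finset.abs_sum_le_sum_abs _ _
      _ ≤ ∑ _k ∈ Finset.Ico 1 N, (2 * Real.log N + 1) := by
          apply Finset.sum_le_sum
          intro k hk
          obtain ⟨hk1, hk2⟩ := Finset.mem_Ico.mp hk
          have hb := log_factorial_bound k hk1
          have hle : Real.log k ≤ Real.log N := by
            apply Real.log_le_log
            · exact_mod_cast Nat.lt_of_lt_of_le Nat.zero_lt_one hk1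
            · exact_mod_cast Nat.le_of_lt hk2
          exact hb.trans (by linarith)
      _ ≤ (N:ℝ) * (2 * Real.log N + 1) := by
          rw [Finset.sum_const, Nat.card_Ico, nsmul_eq_mul]
          have h1 : ((N - 1 : ℕ):ℝ) ≤ (N:ℝ) := by
            have : (N - 1 : ℕ) ≤ N := Nat.sub_le _ _
            exact_mod_cast this
          nlinarith
  have hx := sum_vs_integral hN (mono_xlogx N)
  rw [integral_xlogx hN] at hx
  simp only [Real.log_one, mul_zero, one_mul, sub_zero] at hx
  have hsumk : ∑ k ∈ Finset.Ico 1 N, (k:ℝ) = ((N:ℝ)^2 - N) / 2 := by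
    have h1 : ∑ k ∈ Finset.Ico 1 N, (k:ℝ) = ∑ k ∈ Finset.range N, (k:ℝ) := by
      rw [Finset.range_eq_Ico, ← Finset.sum_Ico_consecutive _ (Nat.zero_le 1) hN]
      simp
    have h2 := Finset.sum_range_id_mul_two N
    have h3 : ((∑ i ∈ Finset.range N, i : ℕ):ℝ) * 2 = ((N * (N-1) : ℕ):ℝ) := by
      exact_mod_cast congrArg (Nat.cast (R := ℝ)) h2
    push_cast [Nat.cast_sub hN] at h3
    rw [h1]
    linarith
  -- assemble
  have hsplit : Lsum N - F N
      = (∑ k ∈ Finset.Ico 1 N, (Real.log (k.factorial) - g k))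
        + ((∑ k ∈ Finset.Ico 1 N, (k:ℝ) * Real.log k)
            - ((N:ℝ)^2/2 * Real.log N - (N:ℝ)^2/4 + 1/4))
        + 1/4 + (N:ℝ)/2 := by
    rw [h0, F]
    rw [Finset.sum_sub_distrib]
    simp only [hg]
    rw [Finset.sum_sub_distrib, hsumk]
    ring
  have hXabs : |(∑ k ∈ Finset.Ico 1 N, (k:ℝ) * Real.log k)
      - ((N:ℝ)^2/2 * Real.log N - (N:ℝ)^2/4 + 1/4)| ≤ (N:ℝ) * Real.log N := by
    exact hx
  rw [hsplit]
  have h1 := abs_le.mp hE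
  have h2 := abs_le.mp hXabs
  rw [abs_le]
  constructor <;> nlinarith [h1.1, h1.2, h2.1, h2.2]

lemma hasDerivAt_F {x : ℝ} (hx : x ≠ 0) :
    HasDerivAt F (x * Real.log x - x) x := by
  have h1 := hasDerivAt_F2 hx
  have h2 : HasDerivAt (fun x : ℝ => x^2/2) x x := by
    have := (hasDerivAt_pow 2 x).div_const 2
    refine this.congr_deriv ?_
    ring
  have := h1.sub h2
  have heq : (fun x : ℝ => x^2/2 * Real.log x - x^2/4 - x^2/2) = F := by
    funext y; rw [F]; ring
  rw [← heq]
  exact this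

lemma F_lip {R a b : ℝ} (ha : a ∈ Set.Icc (1:ℝ) R) (hb : b ∈ Set.Icc (1:ℝ) R) :
    |F b - F a| ≤ (R * (Real.log R + 1)) * |b - a| := by
  have hR : (1:ℝ) ≤ R := le_trans ha.1 ha.2
  have hbound : ∀ x ∈ Set.Icc (1:ℝ) R, ‖x * Real.log x - x‖ ≤ R * (Real.log R + 1) := by
    intro x hx
    have hx1 : (1:ℝ) ≤ x := hx.1
    have hxR : x ≤ R := hx.2
    have hlx : 0 ≤ Real.log x := Real.log_nonneg hx1
    have hlR : Real.log x ≤ Real.log R := Real.log_le_log (by linarith) hxR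
    rw [Real.norm_eq_abs, abs_le]
    exact Set.mem_Icc.mpr ⟨by nlinarith, by nlinarith⟩
  have := Convex.norm_image_sub_le_of_norm_hasDerivWithin_le
    (f := F) (f' := fun x => x * Real.log x - x) (s := Set.Icc (1:ℝ) R)
    (fun x hx => (hasDerivAt_F (by have := hx.1; intro h; rw [h] at this; linarith)).hasDerivWithinAt)
    hbound (convex_Icc _ _) ha hb
  simpa [Real.norm_eq_abs] using this

lemma Emono {a b : ℝ} (ha : 1 ≤ a) (hab : a ≤ b) :
    a * (Real.log a + 1) ≤ b * (Real.log b + 1) := by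
  have h1 : Real.log a ≤ Real.log b := Real.log_le_log (by linarith) hab
  have h2 : 0 ≤ Real.log a := Real.log_nonneg ha
  nlinarith

lemma key_id (s : ℝ) (hs : 0 < s) (n : ℕ) (hn : 1 ≤ n) :
    2 * F ((s+1)*n) - 2 * F (s*n) + F n - F ((2*s+2)*n) + F ((2*s+1)*n)
      = (((2*s+1)^2/2) * Real.log (2*s+1) - s^2 * Real.log s -
          (s+1)^2 * Real.log (s+1) - 2*(s+1)^2 * Real.log 2) * (n:ℝ)^2 := by
  have hn0 : (0:ℝ) < n := by exact_mod_cast hn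
  have hn' : (n:ℝ) ≠ 0 := ne_of_gt hn0
  have h1 : Real.log ((s+1)*n) = Real.log (s+1) + Real.log n :=
    Real.log_mul (by linarith) hn'
  have h2 : Real.log (s*n) = Real.log s + Real.log n :=
    Real.log_mul (ne_of_gt hs) hn'
  have h3 : Real.log ((2*s+2)*n) = Real.log 2 + Real.log (s+1) + Real.log n := by
    have he : (2*s+2) * (n:ℝ) = 2 * ((s+1)*n) := by ring
    rw [he, Real.log_mul two_ne_zero (by positivity), h1]
    ring
  have h4 : Real.log ((2*s+1)*n) = Real.log (2*s+1) + Real.log n :=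
    Real.log_mul (by linarith) hn'
  simp only [F, h1, h2, h3, h4]
  ring

lemma fact_pos (k : ℕ) : (0:ℝ) < k.factorial := by exact_mod_cast k.factorial_pos

/-- With `α = β = ⌊sn⌋`, `Δ_n(s) = ∏_{j=0}^{n−1} (α+j−1)!·(β+j−1)!·j!/(α+β+n+j−2)!`. -/
noncomputable def Δ (s : ℝ) (n : ℕ) : ℝ :=
  ∏ j ∈ Finset.range n,
    ((⌊s * n⌋₊ + j - 1).factorial : ℝ) * ((⌊s * n⌋₊ + j - 1).factorial : ℝ) *
      (j.factorial : ℝ) / ((⌊s * n⌋₊ + ⌊s * n⌋₊ + n + j - 2).factorial : ℝ)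

lemma log_Delta_eq (s : ℝ) (n m : ℕ) (hm : m = ⌊s * n⌋₊) (h2m : 2 ≤ m) :
    Real.log (Δ s n)
      = 2 * (Lsum (m - 1 + n) - Lsum (m - 1)) + Lsum n
        - (Lsum (2*m + n - 2 + n) - Lsum (2*m + n - 2)) := by
  rw [Δ, ← hm]
  rw [Real.log_prod (fun j _ => ne_of_gt
    (div_pos (mul_pos (mul_pos (fact_pos _) (fact_pos _)) (fact_pos _)) (fact_pos _)))]
  have hrw : ∀ j ∈ Finset.range n,
      Real.log (((m + j - 1).factorial : ℝ) * ((m + j - 1).factorial : ℝ) * (j.factorial : ℝ)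
        / ((m + m + n + j - 2).factorial : ℝ))
      = (2 * Real.log (((m - 1 + j).factorial : ℝ)) + Real.log ((j.factorial : ℝ)))
          - Real.log (((2*m + n - 2 + j).factorial : ℝ)) := by
    intro j _
    have e1 : m + j - 1 = m - 1 + j := by omega
    have e2 : m + m + n + j - 2 = 2*m + n - 2 + j := by omega
    rw [e1, e2, Real.log_div (ne_of_gt (mul_pos (mul_pos (fact_pos _) (fact_pos _)) (fact_pos _)))
      (ne_of_gt (fact_pos _)),
      Real.log_mul (ne_of_gt (mul_pos (fact_pos _) (fact_pos _))) (ne_of_gt (fact_pos _)),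
      Real.log_mul (ne_of_gt (fact_pos _)) (ne_of_gt (fact_pos _))]
    ring
  rw [Finset.sum_congr rfl hrw, Finset.sum_sub_distrib, Finset.sum_add_distrib, ← Finset.mul_sum]
  have hsplit : ∀ a : ℕ, ∑ j ∈ Finset.range n, Real.log (((a + j).factorial : ℝ))
      = Lsum (a + n) - Lsum a := by
    intro a
    have := Finset.sum_range_add (fun k => Real.log ((k.factorial : ℝ))) a n
    rw [Lsum, Lsum, this]
    ring
  rw [hsplit, hsplit]
  unfold Lsum
  ring

attribute [irreducible] Lsum F Δ

set_option maxHeartbeats 1000000 in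
/-- For fixed `s > 0`, as `n → ∞`,
`log Δ_n(s) = (((2s+1)²/2)log(2s+1) − s²log s − (s+1)²log(s+1) − 2(s+1)²log 2)·n²
  + O(n log n)`. -/
theorem delta_asymptotic (s : ℝ) (hs : 0 < s) :
    ∃ C > (0 : ℝ), ∃ N : ℕ, ∀ n : ℕ, N ≤ n →
      |Real.log (Δ s n) -
          (((2 * s + 1) ^ 2 / 2) * Real.log (2 * s + 1) - s ^ 2 * Real.log s -
            (s + 1) ^ 2 * Real.log (s + 1) - 2 * (s + 1) ^ 2 * Real.log 2) * (n : ℝ) ^ 2| ≤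
        C * n * Real.log n := by
  refine ⟨300 * (s + 1), by linarith, ⌈3/s⌉₊ + ⌈2*s+2⌉₊ + 3, fun n hn => ?_⟩
  have hn3 : 3 ≤ n := by omega
  have hn1 : 1 ≤ n := by omega
  have hn0 : (0:ℝ) < n := by exact_mod_cast Nat.lt_of_lt_of_le Nat.zero_lt_one hn1
  have hn3r : (3:ℝ) ≤ n := by exact_mod_cast hn3
  have hsn3 : (3:ℝ) ≤ s * n := by
    have h1 : (⌈3/s⌉₊ : ℕ) ≤ n := by omega
    have h2 : 3/s ≤ (n:ℝ) := le_trans (Nat.le_ceil _) (by exact_mod_cast h1)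
    rw [div_le_iff₀ hs] at h2
    linarith
  have h2s2 : 2*s + 2 ≤ (n:ℝ) := by
    have h1 : (⌈2*s+2⌉₊ : ℕ) ≤ n := by omega
    exact le_trans (Nat.le_ceil _) (by exact_mod_cast h1)
  set m := ⌊s * (n:ℕ)⌋₊ with hm
  have hm_le : (m:ℝ) ≤ s * n := Nat.floor_le (by positivity)
  have hm_gt : s * n < (m:ℝ) + 1 := by exact_mod_cast Nat.lt_floor_add_one (s * (n:ℝ))
  have hm2 : 2 ≤ m := by
    have h : (2:ℝ) < (m:ℝ) := by linarith
    have h2 : (2:ℕ) < m := by exact_mod_cast h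
    omega
  have hm2r : (2:ℝ) ≤ (m:ℝ) := by exact_mod_cast hm2
  set a1 := m - 1 + n with ha1
  set a2 := m - 1 with ha2
  set a3 := 2*m + n - 2 + n with ha3
  set a4 := 2*m + n - 2 with ha4
  have hc2 : ((a2:ℕ):ℝ) = (m:ℝ) - 1 := by
    rw [ha2, Nat.cast_sub (by omega)]; norm_num
  have hc1 : ((a1:ℕ):ℝ) = (m:ℝ) - 1 + n := by
    rw [ha1, Nat.cast_add, hc2]
  have hc4 : ((a4:ℕ):ℝ) = 2*(m:ℝ) + n - 2 := by
    rw [ha4, Nat.cast_sub (by omega)]; push_cast; ring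
  have hc3 : ((a3:ℕ):ℝ) = 2*(m:ℝ) + n - 2 + n := by
    rw [ha3, Nat.cast_add, hc4]
  have ha11 : 1 ≤ a1 := by omega
  have ha21 : 1 ≤ a2 := by omega
  have ha31 : 1 ≤ a3 := by omega
  have ha41 : 1 ≤ a4 := by omega
  set R := (2*s + 2) * (n:ℝ) with hR
  have hR1 : (1:ℝ) ≤ R := by rw [hR]; linarith only [hsn3, hn3r]
  have hlogR0 : 0 ≤ Real.log R := Real.log_nonneg hR1
  set E := R * (Real.log R + 1) with hE
  have hE0 : 0 ≤ E := by rw [hE]; positivity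
  have hlog1 : (1:ℝ) ≤ Real.log n := by
    rw [Real.le_log_iff_exp_le hn0]
    exact le_trans (Real.exp_one_lt_d9.le.trans (by norm_num)) hn3r
  have hlogmono : Real.log (2*s+2) ≤ Real.log n := Real.log_le_log (by linarith) h2s2
  have hlogRsplit : Real.log R = Real.log (2*s+2) + Real.log n := by
    rw [hR]; exact Real.log_mul (by linarith) (ne_of_gt hn0)
  have hpn : 0 ≤ (s+1) * (n:ℝ) := by positivity
  have hEb : E ≤ 6 * (s+1) * ((n:ℝ) * Real.log n) := by
    rw [hE, hlogRsplit, hR]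
    linarith only [mul_nonneg hpn (sub_nonneg.mpr hlogmono),
      mul_nonneg hpn (sub_nonneg.mpr hlog1)]
  have hmem1 : ((a1:ℕ):ℝ) ∈ Set.Icc (1:ℝ) R := by
    rw [hc1, hR]
    exact Set.mem_Icc.mpr ⟨by linarith only [hm2r, hn3r],
      by linarith only [hm_le, hsn3, hn3r]⟩
  have hmem2 : ((a2:ℕ):ℝ) ∈ Set.Icc (1:ℝ) R := by
    rw [hc2, hR]
    exact Set.mem_Icc.mpr ⟨by linarith only [hm2r],
      by linarith only [hm_le, hsn3, hn3r]⟩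
  have hmem3 : ((a3:ℕ):ℝ) ∈ Set.Icc (1:ℝ) R := by
    rw [hc3, hR]
    exact Set.mem_Icc.mpr ⟨by linarith only [hm2r, hn3r],
      by linarith only [hm_le, hn3r]⟩
  have hmem4 : ((a4:ℕ):ℝ) ∈ Set.Icc (1:ℝ) R := by
    rw [hc4, hR]
    exact Set.mem_Icc.mpr ⟨by linarith only [hm2r, hn3r],
      by linarith only [hm_le, hn3r]⟩
  have hmemn : ((n:ℕ):ℝ) ∈ Set.Icc (1:ℝ) R := by
    rw [hR]
    exact Set.mem_Icc.mpr ⟨by linarith only [hn3r], by linarith only [hsn3, hn3r]⟩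
  have hmemu1 : (s+1) * (n:ℝ) ∈ Set.Icc (1:ℝ) R := by
    rw [hR]
    exact Set.mem_Icc.mpr ⟨by linarith only [hsn3, hn3r], by linarith only [hsn3, hn3r]⟩
  have hmemu2 : s * (n:ℝ) ∈ Set.Icc (1:ℝ) R := by
    rw [hR]
    exact Set.mem_Icc.mpr ⟨by linarith only [hsn3], by linarith only [hsn3, hn3r]⟩
  have hmemu3 : (2*s+2) * (n:ℝ) ∈ Set.Icc (1:ℝ) R := by
    rw [hR]
    exact Set.mem_Icc.mpr ⟨by linarith only [hsn3, hn3r], le_refl _⟩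
  have hmemu4 : (2*s+1) * (n:ℝ) ∈ Set.Icc (1:ℝ) R := by
    rw [hR]
    exact Set.mem_Icc.mpr ⟨by linarith only [hsn3, hn3r], by linarith only [hn3r]⟩
  clear_value E R
  have hLb : ∀ a : ℕ, 1 ≤ a → ((a:ℕ):ℝ) ∈ Set.Icc (1:ℝ) R → |Lsum a - F a| ≤ 4 * E := by
    intro a ha hmem
    refine (Lsum_bound a ha).trans ?_
    have h1 : (a:ℝ) * (Real.log a + 1) ≤ E := le_trans (Emono hmem.1 hmem.2)
      (le_of_eq hE.symm)
    linarith only [h1]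
  have hL1 := hLb a1 ha11 hmem1
  have hL2 := hLb a2 ha21 hmem2
  have hL3 := hLb a3 ha31 hmem3
  have hL4 := hLb a4 ha41 hmem4
  have hLn := hLb n hn1 hmemn
  have hMb : ∀ (b u : ℝ) (d : ℝ), b ∈ Set.Icc (1:ℝ) R → u ∈ Set.Icc (1:ℝ) R →
      |b - u| ≤ d → |F b - F u| ≤ E * d := by
    intro b u d hb hu hd
    refine (F_lip hu hb).trans ?_
    rw [hE]
    exact mul_le_mul_of_nonneg_left hd (by rw [hE] at hE0; exact hE0)
  have hM1 : |F ((a1:ℕ):ℝ) - F ((s+1)*n)| ≤ E * 2 := by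
    refine hMb _ _ _ hmem1 hmemu1 ?_
    rw [hc1, abs_le]
    exact ⟨by linarith only [hm_le, hm_gt], by linarith only [hm_le, hm_gt]⟩
  have hM2 : |F ((a2:ℕ):ℝ) - F (s*n)| ≤ E * 2 := by
    refine hMb _ _ _ hmem2 hmemu2 ?_
    rw [hc2, abs_le]
    exact ⟨by linarith only [hm_le, hm_gt], by linarith only [hm_le, hm_gt]⟩
  have hM3 : |F ((a3:ℕ):ℝ) - F ((2*s+2)*n)| ≤ E * 4 := by
    refine hMb _ _ _ hmem3 hmemu3 ?_
    rw [hc3, abs_le]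
    exact ⟨by linarith only [hm_le, hm_gt], by linarith only [hm_le, hm_gt]⟩
  have hM4 : |F ((a4:ℕ):ℝ) - F ((2*s+1)*n)| ≤ E * 4 := by
    refine hMb _ _ _ hmem4 hmemu4 ?_
    rw [hc4, abs_le]
    exact ⟨by linarith only [hm_le, hm_gt], by linarith only [hm_le, hm_gt]⟩
  rw [log_Delta_eq s n m hm hm2, ← key_id s hs n hn1]
  rw [← ha1, ← ha2, ← ha3, ← ha4]
  clear_value a1 a2 a3 a4 m
  have hsplit :
      2 * (Lsum a1 - Lsum a2) + Lsum n - (Lsum a3 - Lsum a4)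
        - (2 * F ((s+1)*n) - 2 * F (s*n) + F n - F ((2*s+2)*n) + F ((2*s+1)*n))
      = 2 * (Lsum a1 - F ((a1:ℕ):ℝ)) - 2 * (Lsum a2 - F ((a2:ℕ):ℝ))
        + (Lsum n - F ((n:ℕ):ℝ)) - (Lsum a3 - F ((a3:ℕ):ℝ)) + (Lsum a4 - F ((a4:ℕ):ℝ))
        + 2 * (F ((a1:ℕ):ℝ) - F ((s+1)*n)) - 2 * (F ((a2:ℕ):ℝ) - F (s*n))
        - (F ((a3:ℕ):ℝ) - F ((2*s+2)*n)) + (F ((a4:ℕ):ℝ) - F ((2*s+1)*n)) := by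
    ring
  rw [hsplit]
  have b1 := abs_le.mp hL1
  have b2 := abs_le.mp hL2
  have b3 := abs_le.mp hL3
  have b4 := abs_le.mp hL4
  have b5 := abs_le.mp hLn
  have c1 := abs_le.mp hM1
  have c2 := abs_le.mp hM2
  have c3 := abs_le.mp hM3
  have c4 := abs_le.mp hM4
  have hnln : 0 ≤ (n:ℝ) * Real.log n := by positivity
  have hP0 : 0 ≤ s * ((n:ℝ) * Real.log n) := by positivity
  rw [abs_le]
  refine ⟨?_, ?_⟩
  · linarith only [b1.1, b2.2, b3.2, b4.1, b5.1, c1.1, c2.2, c3.2, c4.1, hEb, hE0, hnln, hP0]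
  · linarith only [b1.2, b2.1, b3.1, b4.2, b5.2, c1.2, c2.1, c3.1, c4.2, hEb, hE0, hnln, hP0]
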